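/- Under Assumption (S), a Borel measurable function I : (0,∞) → ℝ, for which all integrals below are well defined and finite, satisfies I(y·Φ₊'(q₀)) + ∫_{q₀}^1 I(y·Φ₊'(η))·Φ₊'(η)/(q₀·Φ₊'(q₀)) dη = I₀(y)/(q₀·Φ₊'(q₀)) for every y > 0 if and only if it satisfies the linear Volterra integral equation I(t) = (1/(q₀·Φ₊'(q₀)))·I₀(t/Φ₊'(q₀)) + ∫₀ᵗ I(s)·k(t,s) ds for every t > 0. -/

import Mathlib

open MeasureTheory Set Filter Topology

/-- Lemma 5.1 / Lemma `lem:Volterra_S` of the paper.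
Under Assumption (S), a Borel measurable function `I` (with all integrals
well defined and finite) satisfies the renormalized integral equation if and
only if it satisfies the linear Volterra integral equation. -/
theorem stmt_0
    (q₀ : ℝ) (hq₀ : q₀ ∈ Set.Ioo (0:ℝ) 1)
    (Φp DΦp DDΦp : ℝ → ℝ)
    (hΦpD1 : ∀ q ∈ Set.Icc q₀ 1, HasDerivWithinAt Φp (DΦp q) (Set.Icc q₀ 1) q)
    (hΦpD2 : ∀ q ∈ Set.Icc q₀ 1, HasDerivWithinAt DΦp (DDΦp q) (Set.Icc q₀ 1) q)
    (hΦpD2c : ContinuousOn DDΦp (Set.Icc q₀ 1))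
    (hmono : StrictMonoOn Φp (Set.Icc q₀ 1))
    (hconc : ∀ q ∈ Set.Icc q₀ 1, DDΦp q < 0)
    (hDq₀ : 0 < DΦp q₀)
    (hval : Φp q₀ = DΦp q₀ * q₀ - 1)
    (hΦp1 : Φp 1 = 0) (hDΦp1 : DΦp 1 = 0)
    (Dinv : ℝ → ℝ)
    (hDinv : ∀ q ∈ Set.Icc q₀ 1, Dinv (DΦp q) = q)
    (hDinv' : ∀ ξ ∈ Set.Icc 0 (DΦp q₀), Dinv ξ ∈ Set.Icc q₀ 1 ∧ DΦp (Dinv ξ) = ξ)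
    (k : ℝ → ℝ → ℝ)
    (hk : ∀ t s : ℝ, 0 < s → s ≤ t →
      k t s = s * DΦp q₀ / (q₀ * t ^ 2 * DDΦp (Dinv (DΦp q₀ * s / t))))
    (I₀ I : ℝ → ℝ) (hI : Measurable I)
    (hInt1 : ∀ y > (0:ℝ),
      IntervalIntegrable (fun η => I (y * DΦp η) * DΦp η) volume q₀ 1)
    (hInt2 : ∀ t > (0:ℝ),
      IntervalIntegrable (fun s => I s * k t s) volume 0 t) :
    (∀ y > (0:ℝ),
        I (y * DΦp q₀)
          + ∫ η in q₀..1, I (y * DΦp η) * DΦp η / (q₀ * DΦp q₀)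
        = I₀ y / (q₀ * DΦp q₀))
      ↔
    (∀ t > (0:ℝ),
        I t = (1 / (q₀ * DΦp q₀)) * I₀ (t / DΦp q₀)
          + ∫ s in (0:ℝ)..t, I s * k t s) := by
  obtain ⟨hq0pos, hq01⟩ := hq₀
  have hcpos : 0 < q₀ * DΦp q₀ := mul_pos hq0pos hDq₀
  have hcne : q₀ * DΦp q₀ ≠ 0 := ne_of_gt hcpos
  -- Key change-of-variables identity
  have key : ∀ y : ℝ, 0 < y →
      (∫ η in q₀..1, I (y * DΦp η) * DΦp η / (q₀ * DΦp q₀))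
        = - ∫ s in (0:ℝ)..(y * DΦp q₀), I s * k (y * DΦp q₀) s := by
    intro y hy
    set t := y * DΦp q₀ with ht_def
    have ht : 0 < t := mul_pos hy hDq₀
    set φ : ℝ → ℝ := fun η => y * DΦp η with hφ_def
    have hφd : ∀ η ∈ Set.Icc q₀ 1, HasDerivWithinAt φ (y * DDΦp η) (Set.Icc q₀ 1) η :=
      fun η hη => (hΦpD2 η hη).const_mul y
    have hφc : ContinuousOn φ (Set.Icc q₀ 1) :=
      fun η hη => ((hφd η hη).continuousWithinAt)
    have hφanti : StrictAntiOn φ (Set.Icc q₀ 1) := by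
      apply strictAntiOn_of_hasDerivWithinAt_neg (convex_Icc _ _) hφc
      · intro x hx
        have hx' : x ∈ Set.Icc q₀ 1 := interior_subset hx
        exact ((hφd x hx').mono interior_subset)
      · intro x hx
        exact mul_neg_of_pos_of_neg hy (hconc x (interior_subset hx))
    have hmem_q0 : q₀ ∈ Set.Icc q₀ 1 := ⟨le_refl _, hq01.le⟩
    have hmem_1 : (1:ℝ) ∈ Set.Icc q₀ 1 := ⟨hq01.le, le_refl _⟩
    have hφq0 : φ q₀ = t := rfl
    have hφ1 : φ 1 = 0 := by simp [hφ_def, hDΦp1]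
    -- image of the interval
    have himg : φ '' Set.Icc q₀ 1 = Set.Icc 0 t := by
      apply Set.Subset.antisymm
      · rintro _ ⟨η, hη, rfl⟩
        constructor
        · rw [← hφ1]
          rcases eq_or_lt_of_le hη.2 with h | h
          · rw [h]
          · exact (hφanti hη hmem_1 h).le
        · rw [← hφq0]
          rcases eq_or_lt_of_le hη.1 with h | h
          · rw [← h]
          · exact (hφanti hmem_q0 hη h).le
      · intro s hs
        have := intermediate_value_Icc' hq01.le hφc
        rw [hφq0, hφ1] at this
        exact this hs
    -- strict positivity on Ico
    have hφpos : ∀ η ∈ Set.Ico q₀ 1, 0 < φ η := by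
      intro η hη
      rw [← hφ1]
      exact hφanti ⟨hη.1, hη.2.le⟩ hmem_1 hη.2
    have hφle : ∀ η ∈ Set.Ico q₀ 1, φ η ≤ t := by
      intro η hη
      rw [← hφq0]
      rcases eq_or_lt_of_le hη.1 with h | h
      · rw [← h]
      · exact (hφanti hmem_q0 ⟨hη.1, hη.2.le⟩ h).le
    -- change of variables
    have hcov := MeasureTheory.integral_image_eq_integral_abs_deriv_smul
      measurableSet_Icc hφd (hφanti.injOn) (fun s => I s * k t s)
    rw [himg] at hcov
    -- pointwise identity on Ico q₀ 1
    have hpt : ∀ η ∈ Set.Ico q₀ 1,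
        |y * DDΦp η| • (I (φ η) * k t (φ η))
          = -(I (y * DΦp η) * DΦp η / (q₀ * DΦp q₀)) := by
      intro η hη
      have hη' : η ∈ Set.Icc q₀ 1 := ⟨hη.1, hη.2.le⟩
      have hDD : DDΦp η < 0 := hconc η hη'
      have habs : |y * DDΦp η| = -(y * DDΦp η) :=
        abs_of_neg (mul_neg_of_pos_of_neg hy hDD)
      have harg : DΦp q₀ * φ η / t = DΦp η := by
        rw [hφ_def, ht_def]
        field_simp
      have hkval : k t (φ η) = φ η * DΦp q₀ / (q₀ * t ^ 2 * DDΦp η) := by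
        rw [hk t (φ η) (hφpos η hη) (hφle η hη), harg, hDinv η hη']
      rw [smul_eq_mul, habs, hkval, hφ_def, ht_def]
      have hDDne : DDΦp η ≠ 0 := ne_of_lt hDD
      field_simp
    -- rewrite the interval integrals as set integrals
    rw [intervalIntegral.integral_of_le hq01.le, intervalIntegral.integral_of_le ht.le,
      ← MeasureTheory.integral_Icc_eq_integral_Ioc, ← MeasureTheory.integral_Icc_eq_integral_Ioc,
      hcov, MeasureTheory.integral_Icc_eq_integral_Ico,
      MeasureTheory.integral_Icc_eq_integral_Ico]
    rw [show (∫ η in Set.Ico q₀ 1, I (y * DΦp η) * DΦp η / (q₀ * DΦp q₀))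
        = ∫ η in Set.Ico q₀ 1, -(|y * DDΦp η| • (I (φ η) * k t (φ η))) from
      MeasureTheory.setIntegral_congr_fun measurableSet_Ico
        (fun η hη => by rw [hpt η hη]; ring)]
    rw [MeasureTheory.integral_neg]
  constructor
  · intro H t ht
    have hy : 0 < t / DΦp q₀ := div_pos ht hDq₀
    have hty : t / DΦp q₀ * DΦp q₀ = t := div_mul_cancel₀ t (ne_of_gt hDq₀)
    have := H (t / DΦp q₀) hy
    rw [key (t / DΦp q₀) hy, hty] at this
    rw [div_eq_inv_mul, ← one_div] at this
    linarith [this]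
  · intro H y hy
    have ht : 0 < y * DΦp q₀ := mul_pos hy hDq₀
    have hyt : y * DΦp q₀ / DΦp q₀ = y := mul_div_cancel_right₀ y (ne_of_gt hDq₀)
    have := H (y * DΦp q₀) ht
    rw [hyt] at this
    rw [key y hy]
    rw [div_eq_inv_mul (I₀ y), ← one_div]
    linarith [this]
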